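/- For every ε ∈ (3/4, 1) there exists a subpolynomial function h (i.e., h(n) = n^{o(1)}) such that every set X of n integers (n sufficiently large) contains a subset Y with |Y| ≤ εn such that X \ Y admits an injective compression into {1, ..., ⌈n·h(n)⌉}. -/

import Mathlib

/-- `c` is a compression on the finite set `S` of integers: it preserves
all relations `x - 2y + z = 0` among elements of `S`. -/
def IsCompressionOn (S : Finset ℤ) (c : ℤ → ℤ) : Prop :=
  ∀ x ∈ S, ∀ y ∈ S, ∀ z ∈ S, x - 2 * y + z = 0 → c x - 2 * c y + c z = 0

/-- `h` is subpolynomial: `h n ≤ n ^ δ` eventually, for every `δ > 0`. -/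
def Subpolynomial (h : ℕ → ℝ) : Prop :=
  ∀ δ : ℝ, 0 < δ → ∃ N : ℕ, ∀ n : ℕ, N ≤ n → h n ≤ (n : ℝ) ^ δ

namespace CompAux

open Finset

set_option maxHeartbeats 4000000

lemma int_zero_of_dvd_abs_lt {p a : ℤ} (h : p ∣ a) (h2 : |a| < p) : a = 0 := by
  by_contra h0
  exact absurd (Int.le_of_dvd (abs_pos.mpr h0) ((dvd_abs p a).mpr h)) (not_le.mpr h2)

lemma count_emod (p : ℤ) (hp : Prime p) (hp0 : 0 < p) (d : ℤ) (hd : ¬ p ∣ d)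
    (G : Finset ℤ) (hG : G ⊆ Finset.Ico 0 p) :
    ((Finset.Ico (0:ℤ) p).filter (fun l => (l * d) % p ∈ G)).card = G.card := by
  set v : ℤ → ℤ := fun l => (l * d) % p with hv
  have hmaps : ∀ l : ℤ, v l ∈ Finset.Ico (0:ℤ) p := by
    intro l
    simp only [hv, Finset.mem_Ico]
    exact ⟨Int.emod_nonneg _ hp0.ne', Int.emod_lt_of_pos _ hp0⟩
  have hinj : Set.InjOn v (Finset.Ico (0:ℤ) p : Set ℤ) := by
    intro l1 h1 l2 h2 he
    simp only [Finset.coe_Ico, Set.mem_Ico] at h1 h2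
    have hdvd : p ∣ (l1 - l2) * d := by
      rw [sub_mul]
      exact Int.dvd_of_emod_eq_zero (Int.emod_eq_emod_iff_emod_sub_eq_zero.mp he)
    rcases hp.2.2 _ _ hdvd with h | h
    · have : l1 - l2 = 0 := by
        refine int_zero_of_dvd_abs_lt h ?_
        rw [abs_lt]
        constructor <;> linarith [h1.1, h1.2, h2.1, h2.2]
      linarith [this]
    · exact absurd h hd
  have himg : (Finset.Ico (0:ℤ) p).image v = Finset.Ico 0 p := by
    apply Finset.eq_of_subset_of_card_le
    · intro u hu
      rcases Finset.mem_image.1 hu with ⟨l, _, rfl⟩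
      exact hmaps l
    · rw [Finset.card_image_of_injOn hinj]
  have key : ((Finset.Ico (0:ℤ) p).filter (fun l => v l ∈ G)).image v = G := by
    apply Finset.Subset.antisymm
    · intro u hu
      rcases Finset.mem_image.1 hu with ⟨l, hl, rfl⟩
      exact (Finset.mem_filter.1 hl).2
    · intro g hg
      have : g ∈ (Finset.Ico (0:ℤ) p).image v := by rw [himg]; exact hG hg
      rcases Finset.mem_image.1 this with ⟨l, hl, rfl⟩
      exact Finset.mem_image_of_mem v (Finset.mem_filter.2 ⟨hl, hg⟩)
  have hcf : ((Finset.Ico (0:ℤ) p).filter (fun l => v l ∈ G)).card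
      = (((Finset.Ico (0:ℤ) p).filter (fun l => v l ∈ G)).image v).card :=
    (Finset.card_image_of_injOn (hinj.mono (by exact_mod_cast Finset.filter_subset _ _))).symm
  rw [hv] at hcf
  rw [hcf, key]


lemma card_U_le (p q : ℤ) (hq : 0 < q) (hp : 0 < p) :
    (((Finset.Ico (0:ℤ) p).filter (fun u => q ∣ u ∨ q ∣ (u - p))).card : ℤ)
      ≤ 2 * (p / q) + 2 := by
  classical
  have hsub : (Finset.Ico (0:ℤ) p).filter (fun u => q ∣ u ∨ q ∣ (u - p)) ⊆
      ((Finset.Ico (0:ℤ) p).filter (fun u => q ∣ u)) ∪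
      ((Finset.Ico (0:ℤ) p).filter (fun u => q ∣ (u - p))) := by
    intro u hu
    rcases Finset.mem_filter.1 hu with ⟨hu1, hu2 | hu2⟩
    · exact Finset.mem_union_left _ (Finset.mem_filter.2 ⟨hu1, hu2⟩)
    · exact Finset.mem_union_right _ (Finset.mem_filter.2 ⟨hu1, hu2⟩)
  have hdiv0 : (0:ℤ) ≤ p / q := Int.ediv_nonneg hp.le hq.le
  have hc1 : (((Finset.Ico (0:ℤ) p).filter (fun u => q ∣ u)).card : ℤ) ≤ p / q + 1 := by
    have hmap : ∀ u ∈ (Finset.Ico (0:ℤ) p).filter (fun u => q ∣ u),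
        u / q ∈ Finset.Icc (0:ℤ) (p / q) := by
      intro u hu
      rcases Finset.mem_filter.1 hu with ⟨hu1, _⟩
      rw [Finset.mem_Ico] at hu1
      exact Finset.mem_Icc.2 ⟨Int.ediv_nonneg hu1.1 hq.le, Int.ediv_le_ediv hq hu1.2.le⟩
    have hinj : Set.InjOn (fun u : ℤ => u / q)
        ((Finset.Ico (0:ℤ) p).filter (fun u => q ∣ u) : Set ℤ) := by
      intro u1 h1 u2 h2 he
      simp only [Finset.coe_filter, Set.mem_setOf_eq, Finset.mem_Ico] at h1 h2
      have e1 : u1 / q * q = u1 := Int.ediv_mul_cancel h1.2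
      have e2 : u2 / q * q = u2 := Int.ediv_mul_cancel h2.2
      simp only at he
      rw [← e1, ← e2, he]
    have := Finset.card_le_card_of_injOn _ hmap hinj
    have hcard : (Finset.Icc (0:ℤ) (p / q)).card = (p / q + 1).toNat := by
      rw [Int.card_Icc]; ring_nf
    calc (((Finset.Ico (0:ℤ) p).filter (fun u => q ∣ u)).card : ℤ)
        ≤ ((Finset.Icc (0:ℤ) (p / q)).card : ℤ) := by exact_mod_cast this
      _ = p / q + 1 := by rw [hcard, Int.toNat_of_nonneg (by linarith)]
  have hc2 : (((Finset.Ico (0:ℤ) p).filter (fun u => q ∣ (u - p))).card : ℤ) ≤ p / q + 1 := by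
    have hmap : ∀ u ∈ (Finset.Ico (0:ℤ) p).filter (fun u => q ∣ (u - p)),
        (p - u) / q ∈ Finset.Icc (0:ℤ) (p / q) := by
      intro u hu
      rcases Finset.mem_filter.1 hu with ⟨hu1, _⟩
      rw [Finset.mem_Ico] at hu1
      exact Finset.mem_Icc.2 ⟨Int.ediv_nonneg (by linarith) hq.le,
        Int.ediv_le_ediv hq (by linarith)⟩
    have hinj : Set.InjOn (fun u : ℤ => (p - u) / q)
        ((Finset.Ico (0:ℤ) p).filter (fun u => q ∣ (u - p)) : Set ℤ) := by
      intro u1 h1 u2 h2 he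
      simp only [Finset.coe_filter, Set.mem_setOf_eq, Finset.mem_Ico] at h1 h2
      have d1 : q ∣ (p - u1) := by
        have : p - u1 = -(u1 - p) := by ring
        rw [this]; exact dvd_neg.mpr h1.2
      have d2 : q ∣ (p - u2) := by
        have : p - u2 = -(u2 - p) := by ring
        rw [this]; exact dvd_neg.mpr h2.2
      have e1 : (p - u1) / q * q = p - u1 := Int.ediv_mul_cancel d1
      have e2 : (p - u2) / q * q = p - u2 := Int.ediv_mul_cancel d2
      simp only at he
      rw [he] at e1
      linarith [e1, e2]
    have := Finset.card_le_card_of_injOn _ hmap hinj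
    have hcard : (Finset.Icc (0:ℤ) (p / q)).card = (p / q + 1).toNat := by
      rw [Int.card_Icc]; ring_nf
    calc (((Finset.Ico (0:ℤ) p).filter (fun u => q ∣ (u - p))).card : ℤ)
        ≤ ((Finset.Icc (0:ℤ) (p / q)).card : ℤ) := by exact_mod_cast this
      _ = p / q + 1 := by rw [hcard, Int.toNat_of_nonneg (by linarith)]
  have := Finset.card_le_card hsub
  have hun := Finset.card_union_le ((Finset.Ico (0:ℤ) p).filter (fun u => q ∣ u))
      ((Finset.Ico (0:ℤ) p).filter (fun u => q ∣ (u - p)))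
  have : (((Finset.Ico (0:ℤ) p).filter (fun u => q ∣ u ∨ q ∣ (u - p))).card : ℤ)
      ≤ (((Finset.Ico (0:ℤ) p).filter (fun u => q ∣ u)).card : ℤ)
        + (((Finset.Ico (0:ℤ) p).filter (fun u => q ∣ (u - p))).card : ℤ) := by
    exact_mod_cast le_trans this hun
  linarith


lemma core (γ : ℝ) (hγ : 0 < γ) (k : ℕ) :
    ∃ N : ℕ, 2 ≤ N ∧ ∀ n : ℕ, N ≤ n → ∀ X : Finset ℤ, X.card = n →
      ∀ q : ℤ, (n : ℝ) * (n : ℝ) ^ (1 / ((k:ℝ) + 1)) ≤ (q : ℝ) →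
      ∃ S : Finset ℤ, S ⊆ X ∧ (1 / 4 - γ) * (n : ℝ) ≤ (S.card : ℝ) ∧
        ∃ c : ℤ → ℤ, Set.InjOn c (S : Set ℤ) ∧ IsCompressionOn S c ∧
          ∀ x ∈ S, c x ∈ Finset.Icc (1 : ℤ) q := by
  classical
  set C : ℝ := 6 / γ + 1 with hCdef
  have hC6 : 0 < 6 / γ := by positivity
  have hC1 : 1 ≤ C := by rw [hCdef]; linarith
  refine ⟨max 2 ⌈C ^ (k+1)⌉₊, le_max_left _ _, ?_⟩
  intro n hn X hXcard q hq
  have hn2 : 2 ≤ n := le_trans (le_max_left _ _) hn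
  have hnR : (2:ℝ) ≤ (n:ℝ) := by exact_mod_cast hn2
  have hn0 : (0:ℝ) < (n:ℝ) := by linarith
  -- n^{1/(k+1)} ≥ C
  have hCk : (C ^ (k+1) : ℝ) ≤ (n : ℝ) := by
    have h1 : (⌈C ^ (k+1)⌉₊ : ℝ) ≤ (n:ℝ) := by
      exact_mod_cast le_trans (le_max_right 2 _) hn
    exact le_trans (Nat.le_ceil _) h1
  have hroot : C ≤ (n:ℝ) ^ (1 / ((k:ℝ) + 1)) := by
    have h0C : (0:ℝ) ≤ C := by linarith
    have hkpos : (0:ℝ) < (k:ℝ) + 1 := by positivity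
    have h2 : (C ^ (k+1) : ℝ) ^ (1 / ((k:ℝ) + 1)) ≤ (n:ℝ) ^ (1 / ((k:ℝ) + 1)) :=
      Real.rpow_le_rpow (by positivity) hCk (by positivity)
    calc C = (C ^ (k+1) : ℝ) ^ (1 / ((k:ℝ) + 1)) := by
              rw [← Real.rpow_natCast C (k+1), ← Real.rpow_mul h0C]
              push_cast
              rw [mul_one_div, div_self (by positivity), Real.rpow_one]
      _ ≤ _ := h2
  -- q bounds
  have hq6 : 6 * (n:ℝ) ≤ γ * (q:ℝ) := by
    have h1 : (n:ℝ) * C ≤ (q:ℝ) :=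
      le_trans (mul_le_mul_of_nonneg_left hroot hn0.le) hq
    have h2 : (n:ℝ) * (6/γ) ≤ (n:ℝ) * C := by
      apply mul_le_mul_of_nonneg_left _ hn0.le
      rw [hCdef]; linarith
    have h3 : (n:ℝ) * (6/γ) ≤ (q:ℝ) := le_trans h2 h1
    calc 6 * (n:ℝ) = γ * ((n:ℝ) * (6/γ)) := by field_simp
      _ ≤ γ * (q:ℝ) := mul_le_mul_of_nonneg_left h3 hγ.le
  have hqR0 : (0:ℝ) < (q:ℝ) := by nlinarith
  have hq0 : (0:ℤ) < q := by exact_mod_cast hqR0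
  -- X nonempty, min and max
  have hXne : X.Nonempty := by
    rw [← Finset.card_pos, hXcard]; omega
  set a : ℤ := X.min' hXne with ha
  set b : ℤ := X.max' hXne with hb
  set D : ℤ := b - a with hD
  have hD0 : 0 ≤ D := by
    have h := X.min'_le b (X.max'_mem hXne)
    rw [hD]; linarith
  -- choose the prime p
  obtain ⟨pn, hpn, hpnprime⟩ := Nat.exists_infinite_primes
    (max (max ⌈3*(q:ℝ)/γ⌉₊ ⌈6*(n:ℝ)/γ⌉₊) (D.toNat + 1) + 1)
  have hpn1 : ⌈3*(q:ℝ)/γ⌉₊ ≤ pn :=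
    le_trans (le_trans (le_max_left _ _) (le_max_left _ _)) (Nat.le_of_succ_le hpn)
  have hpn2 : ⌈6*(n:ℝ)/γ⌉₊ ≤ pn :=
    le_trans (le_trans (le_max_right _ _) (le_max_left _ _)) (Nat.le_of_succ_le hpn)
  have hpn3 : D.toNat + 1 ≤ pn := le_trans (le_max_right _ _) (Nat.le_of_succ_le hpn)
  set p : ℤ := (pn : ℤ) with hpz
  have hp : Prime p := by
    rw [hpz]; exact_mod_cast (Nat.prime_iff_prime_int).1 hpnprime
  have hpD : D < p := by
    have h2 : (D.toNat : ℤ) < p := by rw [hpz]; exact_mod_cast hpn3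
    rwa [Int.toNat_of_nonneg hD0] at h2
  have hp3q : 3 * (q:ℝ) ≤ γ * (p:ℝ) := by
    have h1 : ((⌈3*(q:ℝ)/γ⌉₊ : ℕ) : ℝ) ≤ ((pn : ℕ) : ℝ) := by exact_mod_cast hpn1
    have h1' : ((⌈3*(q:ℝ)/γ⌉₊ : ℕ) : ℝ) ≤ (p:ℝ) := by rw [hpz]; push_cast; exact h1
    have h2 : 3*(q:ℝ)/γ ≤ (p:ℝ) := le_trans (Nat.le_ceil _) h1'
    calc 3 * (q:ℝ) = γ * (3*(q:ℝ)/γ) := by field_simp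
      _ ≤ γ * (p:ℝ) := mul_le_mul_of_nonneg_left h2 hγ.le
  have hp6n : 6 * (n:ℝ) ≤ γ * (p:ℝ) := by
    have h1 : ((⌈6*(n:ℝ)/γ⌉₊ : ℕ) : ℝ) ≤ ((pn : ℕ) : ℝ) := by exact_mod_cast hpn2
    have h1' : ((⌈6*(n:ℝ)/γ⌉₊ : ℕ) : ℝ) ≤ (p:ℝ) := by rw [hpz]; push_cast; exact h1
    have h2 : 6*(n:ℝ)/γ ≤ (p:ℝ) := le_trans (Nat.le_ceil _) h1'
    calc 6 * (n:ℝ) = γ * (6*(n:ℝ)/γ) := by field_simp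
      _ ≤ γ * (p:ℝ) := mul_le_mul_of_nonneg_left h2 hγ.le
  have hpR0 : (0:ℝ) < (p:ℝ) := by nlinarith
  have hp0 : (0:ℤ) < p := by exact_mod_cast hpR0
  -- window parameters
  set A : ℤ := (p - 1) / 2 with hA
  set L : ℤ := (q - 1) / 2 with hL
  have hA0 : 0 ≤ A := Int.ediv_nonneg (by linarith) (by norm_num)
  have hL0 : 0 ≤ L := Int.ediv_nonneg (by linarith) (by norm_num)
  have h2A : 2 * A ≤ p - 1 := by
    have h := Int.emod_nonneg (p - 1) (two_ne_zero)
    have h2 := Int.emod_def (p - 1) 2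
    omega
  have h2L : 2 * L ≤ q - 1 := by
    have h := Int.emod_nonneg (q - 1) (two_ne_zero)
    have h2 := Int.emod_def (q - 1) 2
    omega
  have h2L2 : q ≤ 2 * L + 2 := by
    have h := Int.emod_lt_of_pos (q - 1) (b := 2) (by norm_num)
    have h2 := Int.emod_def (q - 1) 2
    omega
  have h2A2 : p ≤ 2 * A + 2 := by
    have h := Int.emod_lt_of_pos (p - 1) (b := 2) (by norm_num)
    have h2 := Int.emod_def (p - 1) 2
    omega
  -- Good set and its cardinality bound
  set Good : Finset ℤ := (Finset.Ico (0:ℤ) p).filter (fun v => v ≤ A ∧ v % q ≤ L)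
    with hGoodDef
  set G : ℤ := (Good.card : ℤ) with hGdef
  have hGoodIco : Good ⊆ Finset.Ico 0 p := Finset.filter_subset _ _
  have hGlb : p - 2 * q ≤ 4 * G := by
    set m : ℤ := (A + 1) / q with hm
    have hm0 : 0 ≤ m := Int.ediv_nonneg (by linarith) hq0.le
    have hqm1 : q * m ≤ A + 1 := by
      have h1 := Int.emod_def (A + 1) q
      have h2 := Int.emod_nonneg (A + 1) hq0.ne'
      rw [hm]; linarith
    have hqm : A + 2 - q ≤ q * m := by
      have h1 := Int.emod_def (A + 1) q
      have h2 := Int.emod_lt_of_pos (A + 1) hq0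
      rw [hm]; linarith
    have hmapsG : ∀ ji ∈ Finset.Ico (0:ℤ) m ×ˢ Finset.Ico (0:ℤ) (L+1),
        ji.1 * q + ji.2 ∈ Good := by
      rintro ⟨j, i⟩ hji
      rw [Finset.mem_product, Finset.mem_Ico, Finset.mem_Ico] at hji
      obtain ⟨⟨hj0, hjm⟩, hi0, hiL⟩ := hji
      have hjm1 : j ≤ m - 1 := by linarith
      have h1 : j * q ≤ (m - 1) * q := mul_le_mul_of_nonneg_right hjm1 hq0.le
      have hjq : j * q + i ≤ A := by nlinarith
      have hu0 : 0 ≤ j * q + i := by nlinarith [mul_nonneg hj0 hq0.le]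
      rw [hGoodDef, Finset.mem_filter, Finset.mem_Ico]
      refine ⟨⟨hu0, by linarith⟩, hjq, ?_⟩
      have e : (j * q + i) % q = i := by
        rw [add_comm (j * q) i, Int.add_mul_emod_self_right]
        exact Int.emod_eq_of_lt hi0 (by linarith)
      rw [e]; linarith
    have hinjG : Set.InjOn (fun ji : ℤ × ℤ => ji.1 * q + ji.2)
        (((Finset.Ico (0:ℤ) m ×ˢ Finset.Ico (0:ℤ) (L+1) : Finset (ℤ × ℤ))) : Set (ℤ × ℤ)) := by
      rintro ⟨j1, i1⟩ h1 ⟨j2, i2⟩ h2 he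
      rw [Finset.mem_coe, Finset.mem_product] at h1 h2
      rw [Finset.mem_Ico, Finset.mem_Ico] at h1 h2
      simp only at he
      obtain ⟨h1a, h1b⟩ := h1
      obtain ⟨h2a, h2b⟩ := h2
      have h1 : (0 ≤ j1 ∧ j1 < m) ∧ (0 ≤ i1 ∧ i1 < L + 1) := ⟨h1a, h1b⟩
      have h2 : (0 ≤ j2 ∧ j2 < m) ∧ (0 ≤ i2 ∧ i2 < L + 1) := ⟨h2a, h2b⟩
      have e1 : (j1 * q + i1) % q = i1 := by
        rw [add_comm (j1 * q) i1, Int.add_mul_emod_self_right]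
        exact Int.emod_eq_of_lt h1.2.1 (by linarith [h1.2.2])
      have e2 : (j2 * q + i2) % q = i2 := by
        rw [add_comm (j2 * q) i2, Int.add_mul_emod_self_right]
        exact Int.emod_eq_of_lt h2.2.1 (by linarith [h2.2.2])
      have hi : i1 = i2 := by rw [← e1, ← e2, he]
      have hj : j1 = j2 := by
        have hjj : j1 * q = j2 * q := by linarith
        exact mul_right_cancel₀ hq0.ne' hjj
      simp [hi, hj]
    have hle := Finset.card_le_card_of_injOn _ hmapsG hinjG
    have hcard : ((Finset.Ico (0:ℤ) m ×ˢ Finset.Ico (0:ℤ) (L+1)).card : ℤ) = m * (L + 1) := by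
      rw [Finset.card_product, Int.card_Ico, Int.card_Ico, Nat.cast_mul]
      rw [Int.toNat_of_nonneg (by linarith), Int.toNat_of_nonneg (by linarith)]
      ring
    have hmG : m * (L + 1) ≤ G := by
      rw [hGdef, ← hcard]; exact_mod_cast hle
    nlinarith [mul_le_mul_of_nonneg_left h2L2 hm0]
  have hGub : G ≤ p := by
    have h1 := Finset.card_le_card hGoodIco
    have h2 : ((Finset.Ico (0:ℤ) p).card : ℤ) = p := by
      rw [Int.card_Ico]; rw [Int.toNat_of_nonneg (by linarith)]; ring_nf
    rw [hGdef, ← h2]; exact_mod_cast h1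
  -- the family of maps
  set r : ℤ → ℤ → ℤ := fun l x => (l * (x - a)) % p with hr
  set Kf : ℤ → Finset ℤ := fun l => X.filter (fun x => r l x ≤ A ∧ r l x % q ≤ L) with hKf
  set T : ℤ → ℤ := fun l => ∑ x ∈ X, ∑ y ∈ X.erase x,
      (if q ∣ (r l x - r l y) then (1:ℤ) else 0) with hT
  -- counting sums
  have hIcoP : ((Finset.Ico (0:ℤ) p).card : ℤ) = p := by
    rw [Int.card_Ico]
    rw [Int.toNat_of_nonneg (by linarith)]
    ring
  have hcardf : ∀ l : ℤ, ((Kf l).card : ℤ)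
      = ∑ x ∈ X, (if r l x ≤ A ∧ r l x % q ≤ L then (1:ℤ) else 0) := by
    intro l
    simp only [hKf]
    rw [Finset.card_filter]
    push_cast
    rfl
  have hSumK : (n:ℤ) * G ≤ ∑ l ∈ Finset.Ico (0:ℤ) p, ((Kf l).card : ℤ) := by
    have hperx : ∀ x ∈ X, G ≤ ∑ l ∈ Finset.Ico (0:ℤ) p,
        (if r l x ≤ A ∧ r l x % q ≤ L then (1:ℤ) else 0) := by
      intro x hx
      have hsum : ∑ l ∈ Finset.Ico (0:ℤ) p, (if r l x ≤ A ∧ r l x % q ≤ L then (1:ℤ) else 0)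
          = (((Finset.Ico (0:ℤ) p).filter (fun l => r l x ≤ A ∧ r l x % q ≤ L)).card : ℤ) := by
        rw [Finset.card_filter]; push_cast; rfl
      rw [hsum]
      by_cases hxa : x = a
      · have hall : ∀ l ∈ Finset.Ico (0:ℤ) p, r l x ≤ A ∧ r l x % q ≤ L := by
          intro l _
          have hz : r l x = 0 := by simp [hr, hxa]
          rw [hz]
          exact ⟨hA0, by simpa using hL0⟩
        rw [Finset.filter_true_of_mem hall, hIcoP]
        exact hGub
      · have hd0 : 0 < x - a := by
          have h1 : a ≤ x := X.min'_le x hx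
          have h2 : a ≠ x := fun h => hxa h.symm
          omega
        have hdD : x - a ≤ D := by
          have := X.le_max' x hx
          rw [hD]; linarith
        have hnd : ¬ p ∣ (x - a) := by
          intro hdvd
          have := Int.le_of_dvd hd0 hdvd
          linarith
        have hfe : (Finset.Ico (0:ℤ) p).filter (fun l => r l x ≤ A ∧ r l x % q ≤ L)
            = (Finset.Ico (0:ℤ) p).filter (fun l => (l * (x - a)) % p ∈ Good) := by
          apply Finset.filter_congr
          intro l _
          simp only [hr, hGoodDef, Finset.mem_filter, Finset.mem_Ico]
          constructor
          · intro hcond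
            exact ⟨⟨Int.emod_nonneg _ hp0.ne', Int.emod_lt_of_pos _ hp0⟩, hcond⟩
          · intro hcond
            exact hcond.2
        rw [hfe, count_emod p hp hp0 (x - a) hnd Good hGoodIco, hGdef]
    calc (n:ℤ) * G = ∑ _x ∈ X, G := by
          rw [Finset.sum_const, nsmul_eq_mul, hXcard]
      _ ≤ ∑ x ∈ X, ∑ l ∈ Finset.Ico (0:ℤ) p,
            (if r l x ≤ A ∧ r l x % q ≤ L then (1:ℤ) else 0) := Finset.sum_le_sum hperx
      _ = ∑ l ∈ Finset.Ico (0:ℤ) p, ∑ x ∈ X,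
            (if r l x ≤ A ∧ r l x % q ≤ L then (1:ℤ) else 0) := Finset.sum_comm
      _ = ∑ l ∈ Finset.Ico (0:ℤ) p, ((Kf l).card : ℤ) := by
          exact Finset.sum_congr rfl (fun l _ => (hcardf l).symm)
  have hSumT : ∑ l ∈ Finset.Ico (0:ℤ) p, T l ≤ (n:ℤ)^2 * (2 * (p / q) + 2) := by
    set Uq : Finset ℤ := (Finset.Ico (0:ℤ) p).filter (fun u => q ∣ u ∨ q ∣ (u - p)) with hUqdef
    have hUcard := card_U_le p q hq0 hp0
    have hpair : ∀ x ∈ X, ∀ y ∈ X.erase x,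
        ∑ l ∈ Finset.Ico (0:ℤ) p, (if q ∣ (r l x - r l y) then (1:ℤ) else 0)
          ≤ 2 * (p / q) + 2 := by
      intro x hx y hy
      rw [Finset.mem_erase] at hy
      obtain ⟨hyx, hyX⟩ := hy
      have hsum : ∑ l ∈ Finset.Ico (0:ℤ) p, (if q ∣ (r l x - r l y) then (1:ℤ) else 0)
          = (((Finset.Ico (0:ℤ) p).filter (fun l => q ∣ (r l x - r l y))).card : ℤ) := by
        rw [Finset.card_filter]; push_cast; rfl
      have hsubset : (Finset.Ico (0:ℤ) p).filter (fun l => q ∣ (r l x - r l y))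
          ⊆ (Finset.Ico (0:ℤ) p).filter (fun l => (l * (x - y)) % p ∈ Uq) := by
        intro l hl
        rw [Finset.mem_filter] at hl ⊢
        refine ⟨hl.1, ?_⟩
        have hu0 : 0 ≤ (l * (x - y)) % p := Int.emod_nonneg _ hp0.ne'
        have hup : (l * (x - y)) % p < p := Int.emod_lt_of_pos _ hp0
        have hrx0 : 0 ≤ r l x := Int.emod_nonneg _ hp0.ne'
        have hrxp : r l x < p := Int.emod_lt_of_pos _ hp0
        have hry0 : 0 ≤ r l y := Int.emod_nonneg _ hp0.ne'
        have hryp : r l y < p := Int.emod_lt_of_pos _ hp0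
        have m1 : r l x ≡ l * (x - a) [ZMOD p] := Int.mod_modEq _ _
        have m2 : r l y ≡ l * (y - a) [ZMOD p] := Int.mod_modEq _ _
        have m3 : (l * (x - y)) % p ≡ l * (x - y) [ZMOD p] := Int.mod_modEq _ _
        have m4 : (l * (x - y)) % p - (r l x - r l y)
            ≡ l * (x - y) - (l * (x - a) - l * (y - a)) [ZMOD p] := m3.sub (m1.sub m2)
        have e0 : l * (x - y) - (l * (x - a) - l * (y - a)) = 0 := by ring
        rw [e0] at m4
        have hcong : p ∣ ((l * (x - y)) % p - (r l x - r l y)) :=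
          Int.modEq_zero_iff_dvd.mp m4
        obtain ⟨t, ht⟩ := hcong
        have ht1 : -1 < t := by
          have h5 : p * (-1) < p * t := by nlinarith
          exact lt_of_mul_lt_mul_left h5 hp0.le
        have ht2 : t < 2 := by
          have h5 : p * t < p * 2 := by nlinarith
          exact lt_of_mul_lt_mul_left h5 hp0.le
        rw [Finset.mem_filter]
        refine ⟨Finset.mem_Ico.2 ⟨hu0, hup⟩, ?_⟩
        have ht01 : t = 0 ∨ t = 1 := by omega
        rcases ht01 with rfl | rfl
        · left
          have he2 : (l * (x - y)) % p = r l x - r l y := by linarith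
          rw [he2]; exact hl.2
        · right
          have he2 : (l * (x - y)) % p - p = r l x - r l y := by linarith
          rw [he2]; exact hl.2
      have hd : ¬ p ∣ (x - y) := by
        have hne : x - y ≠ 0 := sub_ne_zero.mpr (fun h => hyx h.symm)
        intro hdvd
        have h1 : p ≤ |x - y| := Int.le_of_dvd (abs_pos.mpr hne) ((dvd_abs _ _).mpr hdvd)
        have h2 : |x - y| ≤ D := by
          rw [abs_le, hD]
          constructor
          · linarith [X.min'_le x hx, X.le_max' y hyX]
          · linarith [X.le_max' x hx, X.min'_le y hyX]
        linarith
      have hcount := count_emod p hp hp0 (x - y) hd Uq (Finset.filter_subset _ _)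
      have hcardle : (((Finset.Ico (0:ℤ) p).filter (fun l => q ∣ (r l x - r l y))).card : ℤ)
          ≤ (Uq.card : ℤ) := by
        rw [← hcount]
        exact_mod_cast Finset.card_le_card hsubset
      rw [hsum]
      linarith
    have hswap : ∑ l ∈ Finset.Ico (0:ℤ) p, T l
        = ∑ x ∈ X, ∑ y ∈ X.erase x, ∑ l ∈ Finset.Ico (0:ℤ) p,
            (if q ∣ (r l x - r l y) then (1:ℤ) else 0) := by
      simp only [hT]
      rw [Finset.sum_comm]
      exact Finset.sum_congr rfl (fun x _ => Finset.sum_comm)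
    rw [hswap]
    have hdiv0 : (0:ℤ) ≤ 2 * (p / q) + 2 := by
      have := Int.ediv_nonneg hp0.le hq0.le
      linarith
    calc ∑ x ∈ X, ∑ y ∈ X.erase x, ∑ l ∈ Finset.Ico (0:ℤ) p,
            (if q ∣ (r l x - r l y) then (1:ℤ) else 0)
        ≤ ∑ x ∈ X, ∑ _y ∈ X.erase x, (2 * (p / q) + 2) := by
          refine Finset.sum_le_sum (fun x hx => Finset.sum_le_sum (fun y hy => hpair x hx y hy))
      _ ≤ (n:ℤ)^2 * (2 * (p / q) + 2) := by
          have hin : ∀ x ∈ X, ∑ _y ∈ X.erase x, (2 * (p / q) + 2)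
              ≤ (n:ℤ) * (2 * (p / q) + 2) := by
            intro x hx
            rw [Finset.sum_const, nsmul_eq_mul]
            have hce : ((X.erase x).card : ℤ) ≤ (n:ℤ) := by
              have := Finset.card_erase_le (s := X) (a := x)
              exact_mod_cast le_trans this (le_of_eq hXcard)
            exact mul_le_mul_of_nonneg_right hce hdiv0
          calc ∑ x ∈ X, ∑ _y ∈ X.erase x, (2 * (p / q) + 2)
              ≤ ∑ _x ∈ X, (n:ℤ) * (2 * (p / q) + 2) := Finset.sum_le_sum hin
            _ = (n:ℤ)^2 * (2 * (p / q) + 2) := by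
                rw [Finset.sum_const, nsmul_eq_mul, hXcard]; ring
  -- choose the best l
  obtain ⟨l₀, hl₀mem, hl₀max⟩ := Finset.exists_max_image (Finset.Ico (0:ℤ) p)
    (fun l => ((Kf l).card : ℤ) - T l) ⟨0, by simp [Finset.mem_Ico]; exact hp0⟩
  have hKey : (n:ℤ) * G - (n:ℤ)^2 * (2 * (p / q) + 2)
      ≤ p * (((Kf l₀).card : ℤ) - T l₀) := by
    have hs : ∑ l ∈ Finset.Ico (0:ℤ) p, (((Kf l).card : ℤ) - T l)
        ≤ (Finset.Ico (0:ℤ) p).card • (((Kf l₀).card : ℤ) - T l₀) :=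
      Finset.sum_le_card_nsmul _ _ _ (fun l hl => hl₀max l hl)
    have hc : ((Finset.Ico (0:ℤ) p).card : ℤ) = p := by
      rw [Int.card_Ico]; rw [Int.toNat_of_nonneg (by linarith)]; ring_nf
    rw [Finset.sum_sub_distrib] at hs
    have : ((Finset.Ico (0:ℤ) p).card) • (((Kf l₀).card : ℤ) - T l₀)
        = p * (((Kf l₀).card : ℤ) - T l₀) := by
      rw [nsmul_eq_mul, hc]
    rw [this] at hs
    linarith [hSumK, hSumT, hs]
  -- bad set at l₀
  set Bl : Finset ℤ := (Kf l₀).filter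
      (fun x => ∃ y ∈ Kf l₀, y ≠ x ∧ r l₀ y % q = r l₀ x % q) with hBl
  have hKfX : ∀ l : ℤ, Kf l ⊆ X := by
    intro l
    simp only [hKf]
    exact Finset.filter_subset _ _
  have hBlT : ((Bl).card : ℤ) ≤ T l₀ := by
    have hite0 : ∀ (P : Prop) [Decidable P], (0:ℤ) ≤ if P then (1:ℤ) else 0 := by
      intro P _; split <;> norm_num
    have h1 : ∀ x ∈ Bl, (1:ℤ) ≤ ∑ y ∈ X.erase x,
        (if q ∣ (r l₀ x - r l₀ y) then (1:ℤ) else 0) := by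
      intro x hxB
      rw [hBl, Finset.mem_filter] at hxB
      obtain ⟨hxK, y, hyK, hyne, hymod⟩ := hxB
      have hyX : y ∈ X := hKfX l₀ hyK
      have hyer : y ∈ X.erase x := Finset.mem_erase.2 ⟨hyne, hyX⟩
      have hdvd : q ∣ (r l₀ x - r l₀ y) := by
        have h2 : r l₀ x % q = r l₀ y % q := hymod.symm
        exact Int.dvd_of_emod_eq_zero (Int.emod_eq_emod_iff_emod_sub_eq_zero.mp h2)
      have hle := Finset.single_le_sum (f := fun y => if q ∣ (r l₀ x - r l₀ y) then (1:ℤ) else 0)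
        (fun y _ => hite0 _) hyer
      refine le_trans ?_ hle
      simp [hdvd]
    have hBX : Bl ⊆ X := le_trans (Finset.filter_subset _ _) (hKfX l₀)
    have h2 : ((Bl).card : ℤ) = ∑ _x ∈ Bl, (1:ℤ) := by
      rw [Finset.sum_const, nsmul_eq_mul, mul_one]
    rw [h2]
    simp only [hT]
    calc ∑ _x ∈ Bl, (1:ℤ)
        ≤ ∑ x ∈ Bl, ∑ y ∈ X.erase x, (if q ∣ (r l₀ x - r l₀ y) then (1:ℤ) else 0) :=
          Finset.sum_le_sum h1
      _ ≤ ∑ x ∈ X, ∑ y ∈ X.erase x, (if q ∣ (r l₀ x - r l₀ y) then (1:ℤ) else 0) :=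
          Finset.sum_le_sum_of_subset_of_nonneg hBX
            (fun x _ _ => Finset.sum_nonneg (fun y _ => hite0 _))
  set S : Finset ℤ := Kf l₀ \ Bl with hS
  have hSX : S ⊆ X := le_trans (Finset.sdiff_subset) (Finset.filter_subset _ _)
  have hScard : ((Kf l₀).card : ℤ) - T l₀ ≤ (S.card : ℤ) := by
    have hBsub : Bl ⊆ Kf l₀ := Finset.filter_subset _ _
    have h1 : S.card = (Kf l₀).card - Bl.card := Finset.card_sdiff_of_subset hBsub
    have h2 : Bl.card ≤ (Kf l₀).card := Finset.card_le_card hBsub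
    have h3 : ((Kf l₀).card : ℤ) - (Bl.card : ℤ) ≤ (S.card : ℤ) := by
      rw [h1]; push_cast [h2]; omega
    linarith [hBlT]
  -- main numeric bound
  have hcount : (1 / 4 - γ) * (n : ℝ) ≤ (S.card : ℝ) := by
    have hks : (n:ℤ) * G - (n:ℤ)^2 * (2 * (p / q) + 2) ≤ p * (S.card : ℤ) := by
      have hmul := mul_le_mul_of_nonneg_left hScard hp0.le
      linarith
    have hRcast : (n:ℝ) * (G:ℝ) - (n:ℝ)^2 * (2 * ((p / q : ℤ):ℝ) + 2) ≤ (p:ℝ) * ((S.card : ℕ):ℝ) := by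
      exact_mod_cast hks
    have hG4 : (p:ℝ) - 2*(q:ℝ) ≤ 4*(G:ℝ) := by exact_mod_cast hGlb
    have hd0 : (0:ℝ) ≤ ((p / q : ℤ):ℝ) := by
      exact_mod_cast Int.ediv_nonneg hp0.le hq0.le
    have hqd : (q:ℝ) * ((p / q : ℤ):ℝ) ≤ (p:ℝ) := by
      have h1 : q * (p / q) ≤ p := by
        have h2 := Int.emod_def p q
        have h3 := Int.emod_nonneg p hq0.ne'
        linarith
      exact_mod_cast h1
    have hNr0 : (0:ℝ) ≤ (n:ℝ) := by positivity
    have hb1 : 2 * (n:ℝ) * (q:ℝ) ≤ (2/3) * (γ * (n:ℝ) * (p:ℝ)) := by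
      have h1 := mul_le_mul_of_nonneg_left hp3q hNr0
      nlinarith
    have h6d : 6 * (n:ℝ) * ((p/q:ℤ):ℝ) ≤ γ * (p:ℝ) := by
      have h1 := mul_le_mul_of_nonneg_right hq6 hd0
      have h3 := mul_le_mul_of_nonneg_left hqd hγ.le
      nlinarith
    have hb2 : 8 * (n:ℝ)^2 * ((p/q:ℤ):ℝ) ≤ (4/3) * (γ * (n:ℝ) * (p:ℝ)) := by
      have h1 := mul_le_mul_of_nonneg_left h6d (show (0:ℝ) ≤ (4/3) * (n:ℝ) by positivity)
      nlinarith
    have hb3 : 8 * (n:ℝ)^2 ≤ (4/3) * (γ * (n:ℝ) * (p:ℝ)) := by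
      have h1 := mul_le_mul_of_nonneg_left hp6n (show (0:ℝ) ≤ (4/3) * (n:ℝ) by positivity)
      nlinarith
    have hNG : (n:ℝ) * ((p:ℝ) - 2*(q:ℝ)) ≤ 4 * ((n:ℝ) * (G:ℝ)) := by
      have h1 := mul_le_mul_of_nonneg_left hG4 hNr0
      nlinarith
    have hγnp : (0:ℝ) ≤ γ * (n:ℝ) * (p:ℝ) := by positivity
    have hexp : (n:ℝ)^2 * (2 * ((p / q : ℤ):ℝ) + 2)
        = 2 * (n:ℝ)^2 * ((p / q : ℤ):ℝ) + 2 * (n:ℝ)^2 := by ring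
    rw [hexp] at hRcast
    have hfinal : (p:ℝ) * ((1/4 - γ) * (n:ℝ)) ≤ (p:ℝ) * ((S.card : ℕ):ℝ) := by
      linarith [hRcast, hNG, hb1, hb2, hb3, hγnp]
    have hPS := (mul_le_mul_iff_right₀ hpR0).mp hfinal
    exact_mod_cast hPS
  -- the compression map
  refine ⟨S, hSX, hcount, fun t => (r l₀ t) % q + 1, ?_, ?_, ?_⟩
  · -- injectivity
    intro x hx y hy hxy
    simp only [Finset.mem_coe] at hx hy
    by_contra hne
    have hxS := Finset.mem_sdiff.1 hx
    have hyS := Finset.mem_sdiff.1 hy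
    have hxy' : r l₀ x % q + 1 = r l₀ y % q + 1 := hxy
    have hmod : r l₀ y % q = r l₀ x % q := by omega
    have : x ∈ Bl := by
      rw [hBl, Finset.mem_filter]
      exact ⟨hxS.1, ⟨y, hyS.1, fun h => hne h.symm, hmod⟩⟩
    exact hxS.2 this
  · -- compression
    intro x hx y hy z hz hrel
    have hxK : x ∈ Kf l₀ := (Finset.mem_sdiff.1 hx).1
    have hyK : y ∈ Kf l₀ := (Finset.mem_sdiff.1 hy).1
    have hzK : z ∈ Kf l₀ := (Finset.mem_sdiff.1 hz).1
    simp only [hKf, Finset.mem_filter] at hxK hyK hzK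
    have hrx0 : 0 ≤ r l₀ x := Int.emod_nonneg _ hp0.ne'
    have hry0 : 0 ≤ r l₀ y := Int.emod_nonneg _ hp0.ne'
    have hrz0 : 0 ≤ r l₀ z := Int.emod_nonneg _ hp0.ne'
    have hcomb : r l₀ x - 2 * r l₀ y + r l₀ z = 0 := by
      have m1 : r l₀ x ≡ l₀ * (x - a) [ZMOD p] := Int.mod_modEq _ _
      have m2 : r l₀ y ≡ l₀ * (y - a) [ZMOD p] := Int.mod_modEq _ _
      have m3 : r l₀ z ≡ l₀ * (z - a) [ZMOD p] := Int.mod_modEq _ _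
      have m4 : r l₀ x - 2 * r l₀ y + r l₀ z
          ≡ l₀ * (x - a) - 2 * (l₀ * (y - a)) + l₀ * (z - a) [ZMOD p] :=
        (m1.sub (m2.mul_left 2)).add m3
      have e0 : l₀ * (x - a) - 2 * (l₀ * (y - a)) + l₀ * (z - a) = l₀ * (x - 2*y + z) := by
        ring
      rw [e0, hrel, mul_zero] at m4
      have hdvd : p ∣ (r l₀ x - 2 * r l₀ y + r l₀ z) := Int.modEq_zero_iff_dvd.mp m4
      refine int_zero_of_dvd_abs_lt hdvd ?_
      rw [abs_lt]
      constructor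
      · linarith [hxK.2.1, hyK.2.1, hzK.2.1]
      · linarith [hxK.2.1, hyK.2.1, hzK.2.1]
    have hwx0 : 0 ≤ r l₀ x % q := Int.emod_nonneg _ hq0.ne'
    have hwy0 : 0 ≤ r l₀ y % q := Int.emod_nonneg _ hq0.ne'
    have hwz0 : 0 ≤ r l₀ z % q := Int.emod_nonneg _ hq0.ne'
    have hwcomb : (r l₀ x % q) - 2 * (r l₀ y % q) + (r l₀ z % q) = 0 := by
      have m1 : r l₀ x % q ≡ r l₀ x [ZMOD q] := Int.mod_modEq _ _
      have m2 : r l₀ y % q ≡ r l₀ y [ZMOD q] := Int.mod_modEq _ _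
      have m3 : r l₀ z % q ≡ r l₀ z [ZMOD q] := Int.mod_modEq _ _
      have m4 : (r l₀ x % q) - 2 * (r l₀ y % q) + (r l₀ z % q)
          ≡ r l₀ x - 2 * r l₀ y + r l₀ z [ZMOD q] := (m1.sub (m2.mul_left 2)).add m3
      rw [hcomb] at m4
      have hdvd : q ∣ ((r l₀ x % q) - 2 * (r l₀ y % q) + (r l₀ z % q)) :=
        Int.modEq_zero_iff_dvd.mp m4
      refine int_zero_of_dvd_abs_lt hdvd ?_
      rw [abs_lt]
      constructor
      · linarith [hxK.2.2, hyK.2.2, hzK.2.2]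
      · linarith [hxK.2.2, hyK.2.2, hzK.2.2]
    show (r l₀ x % q + 1) - 2 * (r l₀ y % q + 1) + (r l₀ z % q + 1) = 0
    linarith
  · -- range
    intro x hxS
    have hx : x ∈ Kf l₀ := (Finset.mem_sdiff.1 hxS).1
    rw [hKf, Finset.mem_filter] at hx
    have h1 : 0 ≤ (r l₀ x) % q := Int.emod_nonneg _ (by exact hq0.ne')
    have h2 : (r l₀ x) % q ≤ L := hx.2.2
    show (r l₀ x % q + 1) ∈ Finset.Icc (1:ℤ) q
    rw [Finset.mem_Icc]
    constructor
    · linarith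
    · have : L ≤ q - 1 := by omega
      linarith

end CompAux

set_option maxHeartbeats 1000000 in
theorem compression_hypothesis_special_case :
    ∀ ε : ℝ, 3 / 4 < ε → ε < 1 →
      ∃ h : ℕ → ℝ, Subpolynomial h ∧
        ∃ N : ℕ, ∀ n : ℕ, N ≤ n → ∀ X : Finset ℤ, X.card = n →
          ∃ Y ⊆ X, (Y.card : ℝ) ≤ ε * n ∧
            ∃ c : ℤ → ℤ, Set.InjOn c ((X \ Y : Finset ℤ) : Set ℤ) ∧
              IsCompressionOn (X \ Y) c ∧
              ∀ x ∈ X \ Y, c x ∈ Finset.Icc (1 : ℤ) ⌈(n : ℝ) * h n⌉ := by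
  intro ε hε1 hε2
  have hγ : 0 < ε - 3/4 := by linarith
  classical
  choose N₀ hN₀2 hN₀ using fun k => CompAux.core (ε - 3/4) hγ k
  set M : ℕ → ℕ := fun k => k + (Finset.range (k+1)).sup N₀ with hM
  have hMN : ∀ k, N₀ k ≤ M k := by
    intro k
    have h1 : N₀ k ≤ (Finset.range (k+1)).sup N₀ :=
      Finset.le_sup (Finset.self_mem_range_succ k)
    simp only [hM]
    omega
  set Kfn : ℕ → ℕ := fun n => Nat.findGreatest (fun k => M k ≤ n) n with hKfn
  set h : ℕ → ℝ := fun n => (n:ℝ) ^ (1 / ((Kfn n : ℝ) + 1)) with hh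
  refine ⟨h, ?_, ?_⟩
  · -- Subpolynomial
    intro δ hδ
    set k₀ : ℕ := ⌈1/δ⌉₊ with hk₀
    refine ⟨max (max (M k₀) k₀) 1, fun n hn => ?_⟩
    have hn1 : 1 ≤ n := le_trans (le_max_right _ _) hn
    have hnK : k₀ ≤ Kfn n := by
      simp only [hKfn]
      apply Nat.le_findGreatest
      · exact le_trans (le_trans (le_max_right _ _) (le_max_left _ _)) hn
      · exact le_trans (le_trans (le_max_left _ _) (le_max_left _ _)) hn
    have hbase : (1:ℝ) ≤ (n:ℝ) := by exact_mod_cast hn1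
    have hexp : 1 / ((Kfn n : ℝ) + 1) ≤ δ := by
      have h1 : (1:ℝ)/δ ≤ (⌈1/δ⌉₊ : ℝ) := Nat.le_ceil _
      have h2 : (k₀ : ℝ) ≤ (Kfn n : ℝ) := by exact_mod_cast hnK
      have h3 : (0:ℝ) < (Kfn n : ℝ) + 1 := by positivity
      rw [div_le_iff₀ h3]
      have h4 : (1:ℝ)/δ ≤ (Kfn n : ℝ) + 1 := by
        calc (1:ℝ)/δ ≤ (k₀:ℝ) := by rw [hk₀]; exact_mod_cast h1
          _ ≤ (Kfn n : ℝ) + 1 := by linarith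
      calc (1:ℝ) = δ * (1/δ) := by field_simp
        _ ≤ δ * ((Kfn n:ℝ) + 1) := mul_le_mul_of_nonneg_left h4 hδ.le
    show (n:ℝ) ^ (1 / ((Kfn n : ℝ) + 1)) ≤ (n:ℝ) ^ δ
    exact Real.rpow_le_rpow_of_exponent_le hbase hexp
  · -- main clause
    refine ⟨M 0 + 1, fun n hn X hX => ?_⟩
    have hM0 : M 0 ≤ n := by omega
    have hMK : M (Kfn n) ≤ n := by
      simp only [hKfn]
      exact Nat.findGreatest_spec (P := fun k => M k ≤ n) (Nat.zero_le n) hM0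
    have hnN₀ : N₀ (Kfn n) ≤ n := le_trans (hMN _) hMK
    have hqge : (n:ℝ) * (n:ℝ) ^ (1 / ((Kfn n : ℝ) + 1)) ≤ ((⌈(n:ℝ) * h n⌉ : ℤ) : ℝ) := by
      have e1 : (n:ℝ) * (n:ℝ) ^ (1 / ((Kfn n : ℝ) + 1)) = (n:ℝ) * h n := by rw [hh]
      rw [e1]
      exact Int.le_ceil _
    obtain ⟨S, hSX, hScard, c, hinj, hcomp, hrange⟩ :=
      hN₀ (Kfn n) n hnN₀ X hX ⌈(n:ℝ) * h n⌉ hqge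
    have hXS : X \ (X \ S) = S := Finset.sdiff_sdiff_eq_self hSX
    refine ⟨X \ S, Finset.sdiff_subset, ?_, c, ?_, ?_, ?_⟩
    · have h2 : S.card ≤ n := by rw [← hX]; exact Finset.card_le_card hSX
      have h3 : ((X \ S).card : ℝ) = (n:ℝ) - (S.card:ℝ) := by
        rw [Finset.card_sdiff_of_subset hSX, hX]
        push_cast [h2]
        ring
      rw [h3]
      have h4 : (1/4 - (ε - 3/4)) * (n:ℝ) = (1 - ε) * n := by ring
      rw [h4] at hScard
      nlinarith [hScard]
    · rw [hXS]; exact hinj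
    · rw [hXS]; exact hcomp
    · rw [hXS]; exact hrange
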